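/- arXiv:1204.2127 — 8 statements merged into one kernel-verified Lean document; each statement's English description precedes it below -/
import Mathlib

section
/- Let n ≥ 2. Let Γ_n be the subgroup of E(n) generated by γ_0 = (I, e_1) and, for i = 1, …, n−1, γ_i = (C_i, (1/2)e_{i+1}), where C_i is the diagonal matrix whose (i,i)-entry is −1 and all other diagonal entries are 1. Let A be the n×n Bott matrix with a_{i,j} = 1 if j = i+1 and a_{i,j} = 0 otherwise, and let Γ(A) be the associated group generated by s_1, …, s_n. Let G be the permutation matrix with g_{i,j} = 1 if j = n−i+1 and g_{i,j} = 0 otherwise. Then (G,0)·Γ_n·(G,0)^{−1} = Γ(A); more precisely, conjugation by (G,0) sends γ_0 to s_n and γ_i to s_{n−i} for i = 1, …, n−1. -/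
noncomputable section

open Matrix

/-- The Euclidean group `E(n)`: pairs `(M, b)` with `M ∈ O(n)`, `b ∈ ℝⁿ`,
acting on `ℝⁿ` by `x ↦ M x + b`. -/
@[ext]
structure EuclideanGroup (n : ℕ) where
  M : Matrix.orthogonalGroup (Fin n) ℝ
  b : Fin n → ℝ

namespace EuclideanGroup

variable {n : ℕ}

instance : Mul (EuclideanGroup n) :=
  ⟨fun g h => ⟨g.M * h.M, (g.M : Matrix (Fin n) (Fin n) ℝ) *ᵥ h.b + g.b⟩⟩

instance : One (EuclideanGroup n) := ⟨⟨1, 0⟩⟩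

instance : Inv (EuclideanGroup n) :=
  ⟨fun g => ⟨g.M⁻¹, -(star (g.M : Matrix (Fin n) (Fin n) ℝ) *ᵥ g.b)⟩⟩

@[simp] theorem mul_M (g h : EuclideanGroup n) : (g * h).M = g.M * h.M := rfl
@[simp] theorem mul_b (g h : EuclideanGroup n) :
    (g * h).b = (g.M : Matrix (Fin n) (Fin n) ℝ) *ᵥ h.b + g.b := rfl
@[simp] theorem one_M : (1 : EuclideanGroup n).M = 1 := rfl
@[simp] theorem one_b : (1 : EuclideanGroup n).b = 0 := rfl
@[simp] theorem inv_M (g : EuclideanGroup n) : g⁻¹.M = g.M⁻¹ := rfl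
@[simp] theorem inv_b (g : EuclideanGroup n) :
    g⁻¹.b = -(star (g.M : Matrix (Fin n) (Fin n) ℝ) *ᵥ g.b) := rfl

instance : Group (EuclideanGroup n) where
  mul_assoc a b c :=
    EuclideanGroup.ext (mul_assoc _ _ _)
      (by simp [Matrix.mulVec_add, Matrix.mulVec_mulVec, add_assoc])
  one_mul a := by ext <;> simp
  mul_one a := by ext <;> simp
  inv_mul_cancel a :=
    EuclideanGroup.ext (inv_mul_cancel _) (by exact add_neg_cancel _)

end EuclideanGroup


/-- A Bott matrix: a strictly upper triangular binary matrix
(entries `0` or `1`, and `A i j = 0` whenever `j ≤ i`). -/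
def IsBottMatrix {n : ℕ} (A : Matrix (Fin n) (Fin n) ℕ) : Prop :=
  (∀ i j : Fin n, A i j = 0 ∨ A i j = 1) ∧ ∀ i j : Fin n, (j : ℕ) ≤ (i : ℕ) → A i j = 0

/-- The diagonal matrix `D_i` with `(k,k)`-entry `(-1) ^ (A i k)`. -/
def Dmat {n : ℕ} (A : Matrix (Fin n) (Fin n) ℕ) (i : Fin n) : Matrix (Fin n) (Fin n) ℝ :=
  Matrix.diagonal fun k => (-1 : ℝ) ^ (A i k)

theorem diagonal_pm_mem_orthogonalGroup {n : ℕ} (d : Fin n → ℝ)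
    (hd : ∀ k, d k = 1 ∨ d k = -1) :
    Matrix.diagonal d ∈ Matrix.orthogonalGroup (Fin n) ℝ := by
  rw [Matrix.mem_orthogonalGroup_iff]
  have : star (Matrix.diagonal d) = Matrix.diagonal d := by
    simp [Matrix.star_eq_conjTranspose, Matrix.diagonal_conjTranspose]
  rw [Matrix.diagonal_transpose, Matrix.diagonal_mul_diagonal]
  have h1 : (fun k => d k * d k) = fun _ => (1 : ℝ) :=
    funext fun k => by rcases hd k with h | h <;> simp [h]
  rw [h1, Matrix.diagonal_one]

theorem Dmat_mem {n : ℕ} (A : Matrix (Fin n) (Fin n) ℕ) (i : Fin n) :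
    Dmat A i ∈ Matrix.orthogonalGroup (Fin n) ℝ := by
  refine diagonal_pm_mem_orthogonalGroup _ fun k => ?_
  rcases Nat.even_or_odd (A i k) with h | h
  · exact Or.inl (h.neg_one_pow)
  · exact Or.inr (h.neg_one_pow)

/-- `D_i` as an element of the orthogonal group. -/
def Dorth {n : ℕ} (A : Matrix (Fin n) (Fin n) ℕ) (i : Fin n) :
    Matrix.orthogonalGroup (Fin n) ℝ :=
  ⟨Dmat A i, Dmat_mem A i⟩

/-- The generators `s_i` of the Bieberbach group of the real Bott manifold `M(A)`:
for `i` with `i + 1 < n` (i.e. the mathematical indices `1 ≤ i ≤ n - 1`),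
`s_i = (D_i, (1/2) e_i)`, and the last generator (mathematical index `n`) is
`s_n = (I, e_n)`.  (Indices are `0`-based.) -/
def sgen {n : ℕ} (A : Matrix (Fin n) (Fin n) ℕ) (i : Fin n) : EuclideanGroup n :=
  if (i : ℕ) + 1 = n then ⟨1, Pi.single i 1⟩
  else ⟨Dorth A i, Pi.single i (1 / 2 : ℝ)⟩

/-- The fundamental group `Γ(A)` of the real Bott manifold `M(A)`, as the subgroup
of `E(n)` generated by `s_1, …, s_n`. -/
def BottGroup {n : ℕ} (A : Matrix (Fin n) (Fin n) ℕ) : Subgroup (EuclideanGroup n) :=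
  Subgroup.closure (Set.range (sgen A))

theorem sgen_mem {n : ℕ} (A : Matrix (Fin n) (Fin n) ℕ) (i : Fin n) :
    sgen A i ∈ BottGroup A :=
  Subgroup.subset_closure (Set.mem_range_self i)

/-- The homomorphism sending an affine isometry `(M, b)` to its linear part `M`. -/
def linearPart (n : ℕ) : EuclideanGroup n →* Matrix.orthogonalGroup (Fin n) ℝ where
  toFun g := g.M
  map_one' := rfl
  map_mul' _ _ := rfl

/-- The reversal permutation matrix `G` with `G i j = 1` iff `j = n - 1 - i` (`0`-based). -/
def Gperm (n : ℕ) : Matrix (Fin n) (Fin n) ℝ := fun i j => if j = i.rev then 1 else 0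

theorem Gperm_mem (n : ℕ) : Gperm n ∈ Matrix.orthogonalGroup (Fin n) ℝ := by
  rw [Matrix.mem_orthogonalGroup_iff]
  ext i j
  simp only [Matrix.mul_apply, Gperm, Matrix.star_eq_conjTranspose,
    Matrix.conjTranspose_apply, Matrix.transpose_apply, star_trivial, ite_mul, one_mul, zero_mul,
    Matrix.one_apply]
  rw [Finset.sum_ite_eq' Finset.univ i.rev]
  simp [Fin.rev_inj, eq_comm]

/-- The generators `γ₀, γ₁, …, γ_{n-1}` of the group `Γ_n` (`0`-based indexing):
`γ₀ = (I, e₁)` and, for `1 ≤ i ≤ n - 1`, `γ_i = (C_i, (1/2) e_{i+1})`, where `C_i` is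
the diagonal matrix whose `(i,i)`-entry is `-1` and all other diagonal entries are `1`. -/
def gammaGen (n : ℕ) (i : Fin n) : EuclideanGroup n :=
  if (i : ℕ) = 0 then ⟨1, Pi.single i 1⟩
  else
    ⟨⟨Matrix.diagonal fun k => if (k : ℕ) = (i : ℕ) - 1 then (-1 : ℝ) else 1,
        diagonal_pm_mem_orthogonalGroup _ fun k => by
          by_cases hk : (k : ℕ) = (i : ℕ) - 1 <;> simp [hk]⟩,
      Pi.single i (1 / 2 : ℝ)⟩
theorem Gperm_mulVec_single {n : ℕ} (i : Fin n) (c : ℝ) :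
    Gperm n *ᵥ Pi.single i c = Pi.single i.rev c := by
  funext k
  simp only [Matrix.mulVec, dotProduct, Gperm, ite_mul, one_mul, zero_mul]
  rw [Finset.sum_ite_eq' Finset.univ k.rev]
  simp only [Finset.mem_univ, if_true]
  rw [Pi.single_apply, Pi.single_apply]
  by_cases h : k = i.rev
  · subst h; simp
  · rw [if_neg (fun hc => h (by rw [← hc, Fin.rev_rev])), if_neg h]

/-- Conjugation by `(G, 0)` carries `Γ_n` onto `Γ(A)`, where `A` is the
Bott matrix with `a_{i,j} = 1` iff `j = i + 1`; more precisely it sends `γ₀` to `s_n` and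
`γ_i` to `s_{n-i}` (in `0`-based indexing, `γ_i ↦ s_{rev i}`). -/
theorem conj_gamma_eq_bott (n : ℕ) (hn : 2 ≤ n)
    (A : Matrix (Fin n) (Fin n) ℕ)
    (hA : ∀ i j : Fin n, A i j = if (j : ℕ) = (i : ℕ) + 1 then 1 else 0)
    (g : EuclideanGroup n) (hg : g = ⟨⟨Gperm n, Gperm_mem n⟩, 0⟩) :
    (∀ i : Fin n, g * gammaGen n i * g⁻¹ = sgen A i.rev) ∧
    Subgroup.map (MulAut.conj g).toMonoidHom
        (Subgroup.closure (Set.range (gammaGen n))) = BottGroup A := by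
  have key : ∀ i : Fin n, g * gammaGen n i = sgen A i.rev * g := by
    intro i
    have hlt := i.isLt
    have hvr : (i.rev : ℕ) = n - ((i : ℕ) + 1) := Fin.val_rev i
    by_cases hi : (i : ℕ) = 0
    · have hrev : ((i.rev : ℕ)) + 1 = n := by omega
      have hγ : gammaGen n i = ⟨1, Pi.single i 1⟩ := by rw [gammaGen, if_pos hi]
      have hs : sgen A i.rev = ⟨1, Pi.single i.rev 1⟩ := by rw [sgen, if_pos hrev]
      refine EuclideanGroup.ext ?_ ?_ <;>
        simp [hg, hγ, hs, Gperm_mulVec_single, -Matrix.mulVec_single]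
    · have hrev : ¬ ((i.rev : ℕ)) + 1 = n := by omega
      have hγ : gammaGen n i = ⟨⟨Matrix.diagonal fun k : Fin n =>
            if (k : ℕ) = (i : ℕ) - 1 then (-1 : ℝ) else 1,
            diagonal_pm_mem_orthogonalGroup _ fun k => by
              by_cases hk : (k : ℕ) = (i : ℕ) - 1 <;> simp [hk]⟩,
          Pi.single i (1 / 2 : ℝ)⟩ := by rw [gammaGen, if_neg hi]
      have hs : sgen A i.rev = ⟨Dorth A i.rev, Pi.single i.rev (1 / 2 : ℝ)⟩ := by
        rw [sgen, if_neg hrev]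
      have hMmat : Gperm n * (Matrix.diagonal fun k : Fin n =>
            if (k : ℕ) = (i : ℕ) - 1 then (-1 : ℝ) else 1)
          = Dmat A i.rev * Gperm n := by
        ext j k
        rw [Matrix.mul_diagonal, Dmat, Matrix.diagonal_mul]
        unfold Gperm
        by_cases hk : k = j.rev
        · subst hk
          simp only [if_pos rfl, mul_one, one_mul]
          rw [hA]
          have h3 : (j.rev : ℕ) = n - ((j : ℕ) + 1) := Fin.val_rev j
          have h2 := j.isLt
          by_cases hc : ((j.rev : Fin n) : ℕ) = (i : ℕ) - 1
          · rw [if_pos hc]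
            have hj : (j : ℕ) = ((i.rev : Fin n) : ℕ) + 1 := by omega
            rw [if_pos hj, pow_one]; simp [mul_comm]
          · rw [if_neg hc]
            have hj : ¬ (j : ℕ) = ((i.rev : Fin n) : ℕ) + 1 := by omega
            rw [if_neg hj, pow_zero]; simp [mul_comm]
        · simp [hk]
      refine EuclideanGroup.ext ?_ ?_
      · rw [hγ, hs, EuclideanGroup.mul_M, EuclideanGroup.mul_M]
        refine Subtype.ext ?_
        simpa [hg, Dorth] using hMmat
      · simp [hg, hγ, hs, Gperm_mulVec_single, -Matrix.mulVec_single]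
  have key' : ∀ i : Fin n, g * gammaGen n i * g⁻¹ = sgen A i.rev := by
    intro i
    rw [key i, mul_inv_cancel_right]
  refine ⟨key', ?_⟩
  rw [MonoidHom.map_closure]
  have himg : (MulAut.conj g).toMonoidHom '' Set.range (gammaGen n)
      = Set.range (sgen A) := by
    rw [← Set.range_comp]
    have : (MulAut.conj g).toMonoidHom ∘ gammaGen n = fun i => sgen A i.rev := by
      funext i
      simpa [MulAut.conj] using key' i
    rw [this]
    exact Set.range_comp (sgen A) Fin.rev ▸ (Fin.rev_surjective.range_comp (sgen A))
  rw [himg]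
  rfl
end
end

section
/- For all 1 ≤ i < j ≤ n, the generators s_i and s_j of Γ(A) commute, s_i s_j = s_j s_i, if and only if a_{i,j} = 0. -/
noncomputable section

open Matrix

theorem diag_mulVec_single {n : ℕ} (d : Fin n → ℝ) (k : Fin n) (c : ℝ) :
    (Matrix.diagonal d) *ᵥ Pi.single k c = Pi.single k (d k * c) := by
  funext l
  simp [Matrix.mulVec, dotProduct, Matrix.diagonal, Pi.single_apply]
  by_cases h : l = k <;> simp [h, mul_comm]

/-- For `1 ≤ i < j ≤ n`, the generators `s_i` and `s_j` commute
if and only if `a_{i,j} = 0`. -/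
theorem sgen_commute_iff (n : ℕ) (hn : 2 ≤ n)
    (A : Matrix (Fin n) (Fin n) ℕ) (hA : IsBottMatrix A) :
    ∀ i j : Fin n, i < j →
      (sgen A i * sgen A j = sgen A j * sgen A i ↔ A i j = 0) := by
  intro i j hij
  have hi1 : (i : ℕ) + 1 ≠ n := by omega
  have hAji : A j i = 0 := hA.2 j i (le_of_lt hij)
  have hne : i ≠ j := ne_of_lt hij
  have hcase : sgen A i * sgen A j = sgen A j * sgen A i ↔
      ((-1 : ℝ) ^ (A i j)) = 1 := by
    by_cases hj1 : (j : ℕ) + 1 = n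
    · rw [sgen, sgen, if_neg hi1, if_pos hj1]
      constructor
      · intro h
        have hb := congrArg EuclideanGroup.b h
        simp only [EuclideanGroup.mul_b] at hb
        have := congrFun hb j
        simp [Dorth, Dmat, diag_mulVec_single, Pi.single_apply, hne, Ne.symm hne] at this
        linarith [this]
      · intro h
        ext1
        · simp [mul_comm]
        · show _ + _ = _ + _
          funext l
          simp only [Pi.add_apply, Submonoid.coe_one, Matrix.mulVec, dotProduct]
          simp only [Dorth, Dmat, Matrix.diagonal_apply, Matrix.one_apply, Pi.single_apply]
          rcases eq_or_ne l i with rfl | h1 <;> rcases eq_or_ne l j with rfl | h2 <;>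
            simp_all [h]
    · rw [sgen, sgen, if_neg hi1, if_neg hj1]
      constructor
      · intro h
        have hb := congrArg EuclideanGroup.b h
        simp only [EuclideanGroup.mul_b] at hb
        have := congrFun hb j
        simp [Dorth, Dmat, diag_mulVec_single, Pi.single_apply, hne, Ne.symm hne] at this
        linarith [this]
      · intro h
        ext1
        · ext : 1
          simp [Dorth, Dmat, Matrix.diagonal_mul_diagonal, mul_comm]
        · show _ + _ = _ + _
          funext l
          simp only [Pi.add_apply, Matrix.mulVec, dotProduct]
          simp only [Dorth, Dmat, Matrix.diagonal_apply, Pi.single_apply]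
          rcases eq_or_ne l i with rfl | h1 <;> rcases eq_or_ne l j with rfl | h2 <;>
            simp_all [h, hAji]
  rw [hcase]
  rcases hA.1 i j with h | h <;> simp [h] <;> norm_num
end
end

section
/- For all 1 ≤ i < j ≤ n one has the identity (s_i s_j)² = s_i² in E(n) if and only if a_{i,j} = 1. (This is the group relation used in the proof of part II of the main theorem.) -/
noncomputable section

open Matrix

/-- For `1 ≤ i < j ≤ n`, one has `(s_i s_j)² = s_i²` in `E(n)` if and
only if `a_{i,j} = 1`. -/
theorem sgen_mul_sq_eq_sq_iff (n : ℕ) (hn : 2 ≤ n)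
    (A : Matrix (Fin n) (Fin n) ℕ) (hA : IsBottMatrix A) :
    ∀ i j : Fin n, i < j →
      ((sgen A i * sgen A j) ^ 2 = (sgen A i) ^ 2 ↔ A i j = 1) := by
  intro i j hij
  have hjlt := j.isLt
  have hin : ¬ ((i : ℕ) + 1 = n) := by omega
  have hii : A i i = 0 := hA.2 i i le_rfl
  have hji : A j i = 0 := hA.2 j i (le_of_lt hij)
  have hjj : A j j = 0 := hA.2 j j le_rfl
  have hne : i ≠ j := ne_of_lt hij
  have hsq : ∀ m : ℕ, ((-1 : ℝ) ^ m) * ((-1 : ℝ) ^ m) = 1 := by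
    intro m
    rw [← pow_add, ← two_mul, pow_mul]
    norm_num
  by_cases hjn : (j : ℕ) + 1 = n
  · rw [sgen, sgen, if_neg hin, if_pos hjn]
    constructor
    · intro h
      by_contra hcon
      have ha : A i j = 0 := (hA.1 i j).resolve_right hcon
      have hb := congrArg (fun g => EuclideanGroup.b g j) h
      simp only [pow_two, EuclideanGroup.mul_b, EuclideanGroup.mul_M, Pi.add_apply,
        Dorth, Dmat, Submonoid.coe_mul, OneMemClass.coe_one, Matrix.one_mul,
        Matrix.mul_one, Matrix.one_mulVec, Matrix.mulVec_diagonal,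
        Pi.single_apply] at hb
      simp [Ne.symm hne, ha, hii] at hb
    · intro ha
      ext1
      · simp [pow_two]
      · funext k
        simp only [pow_two, EuclideanGroup.mul_b, EuclideanGroup.mul_M, Pi.add_apply,
          Dorth, Dmat, Submonoid.coe_mul, OneMemClass.coe_one, Matrix.one_mul,
          Matrix.mul_one, Matrix.one_mulVec, Matrix.mulVec_diagonal,
          Pi.single_apply]
        rcases eq_or_ne k i with rfl | hki
        · simp [hne, Ne.symm hne, hii]
        · rcases eq_or_ne k j with rfl | hkj
          · simp [Ne.symm hne, ha, Ne.symm hki]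
          · simp [hki, hkj]
  · rw [sgen, sgen, if_neg hin, if_neg hjn]
    constructor
    · intro h
      by_contra hcon
      have ha : A i j = 0 := (hA.1 i j).resolve_right hcon
      have hb := congrArg (fun g => EuclideanGroup.b g j) h
      simp only [pow_two, EuclideanGroup.mul_b, EuclideanGroup.mul_M, Pi.add_apply,
        Dorth, Dmat, Submonoid.coe_mul, Matrix.diagonal_mul_diagonal,
        Matrix.mulVec_diagonal, Pi.single_apply] at hb
      simp [Ne.symm hne, ha, hii, hjj] at hb
    · intro ha
      ext1
      · apply Subtype.ext
        simp only [pow_two, EuclideanGroup.mul_M, Submonoid.coe_mul, Dorth, Dmat,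
          Matrix.diagonal_mul_diagonal]
        exact congrArg Matrix.diagonal
          (funext fun k => by rw [mul_mul_mul_comm, hsq, hsq, one_mul])
      · funext k
        simp only [pow_two, EuclideanGroup.mul_b, EuclideanGroup.mul_M, Pi.add_apply,
          Dorth, Dmat, Submonoid.coe_mul, Matrix.diagonal_mul_diagonal,
          Matrix.mulVec_diagonal, Pi.single_apply]
        rcases eq_or_ne k i with rfl | hki
        · simp [hne, Ne.symm hne, hii, hji]
        · rcases eq_or_ne k j with rfl | hkj
          · simp only [if_neg hki, if_pos rfl, hjj, ha, pow_zero, pow_one]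
            norm_num
          · simp [hki, hkj]
end
end

section
/- For each 1 ≤ i ≤ n−1 the determinant of the linear part D_i of the generator s_i equals (−1)^{Σ_{k=1}^{n} a_{i,k}}. Consequently, every element of Γ(A) has linear part of determinant 1 (i.e. Γ(A) consists of orientation-preserving isometries, so M(A) is orientable) if and only if for every i the number of nonzero entries in the i-th row of A is even. -/
noncomputable section

open Matrix

/-- `det D_i = (-1)^{Σ_k a_{i,k}}` for `1 ≤ i ≤ n - 1`, and every element
of `Γ(A)` has linear part of determinant `1` (i.e. `M(A)` is orientable) if and only if
every row of `A` has an even number of nonzero entries. -/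
theorem orientable_iff_rows_even (n : ℕ) (hn : 2 ≤ n)
    (A : Matrix (Fin n) (Fin n) ℕ) (hA : IsBottMatrix A) :
    (∀ i : Fin n, (i : ℕ) + 1 < n → (Dmat A i).det = (-1 : ℝ) ^ (∑ k : Fin n, A i k)) ∧
    ((∀ g ∈ BottGroup A, ((g.M : Matrix (Fin n) (Fin n) ℝ)).det = 1) ↔
      ∀ i : Fin n, Even (Finset.univ.filter fun k => A i k ≠ 0).card) := by
  obtain ⟨h01, hupper⟩ := hA
  have hsum : ∀ i : Fin n, ∑ k, A i k = (Finset.univ.filter fun k => A i k ≠ 0).card := by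
    intro i
    rw [Finset.card_filter]
    refine Finset.sum_congr rfl fun k _ => ?_
    rcases h01 i k with h | h <;> simp [h]
  have hdet : ∀ i : Fin n, (Dmat A i).det = (-1 : ℝ) ^ (∑ k : Fin n, A i k) := by
    intro i
    rw [Dmat, Matrix.det_diagonal, Finset.prod_pow_eq_pow_sum]
  have hiff : ∀ i : Fin n, (Dmat A i).det = 1 ↔
      Even (Finset.univ.filter fun k => A i k ≠ 0).card := by
    intro i
    rw [hdet i, hsum i, neg_one_pow_eq_one_iff_even (by norm_num : (-1 : ℝ) ≠ 1)]
  refine ⟨fun i _ => hdet i, ?_, ?_⟩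
  · intro hg i
    by_cases hlast : (i : ℕ) + 1 = n
    · have : (Finset.univ.filter fun k => A i k ≠ 0) = ∅ := by
        refine Finset.eq_empty_of_forall_notMem fun k hk => ?_
        simp only [Finset.mem_filter] at hk
        exact hk.2 (hupper i k (by omega))
      simp [this]
    · have h1 := hg (sgen A i) (sgen_mem A i)
      rw [sgen, if_neg hlast] at h1
      exact (hiff i).mp h1
  · intro heven g hg
    refine Subgroup.closure_induction ?_ ?_ ?_ ?_ hg
    · rintro x ⟨i, rfl⟩
      rw [sgen]
      split
      · simp
      · exact (hiff i).mpr (heven i)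
    · simp
    · intro x y _ _ hx hy
      have : ((x * y).M : Matrix (Fin n) (Fin n) ℝ) =
          (x.M : Matrix (Fin n) (Fin n) ℝ) * (y.M : Matrix (Fin n) (Fin n) ℝ) := rfl
      rw [this, Matrix.det_mul, hx, hy, mul_one]
    · intro x _ hx
      simpa [Matrix.star_eq_conjTranspose, Matrix.det_conjTranspose] using hx
end
end

section
/- (Main Theorem, part I, Spin case, group-theoretic form.) Let A be a Bott matrix such that every row of A has an even number of nonzero entries (so M(A) is orientable). Suppose there exist 1 ≤ i < j ≤ n−1 with a_{i,j} = 0 and such that l := #{m : a_{i,m} = a_{j,m} = 1} is odd. Put S_i = {m : a_{i,m} = 1} and S_j = {m : a_{j,m} = 1}. Then there exists no group homomorphism ε from Γ(A) to the group of units of Cl_n satisfying ε(s_i) ∈ {e_{S_i}, −e_{S_i}} and ε(s_j) ∈ {e_{S_j}, −e_{S_j}}. (Such a homomorphism would be induced by a Spin structure on M(A); hence M(A) admits no Spin structure.) -/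
noncomputable section

open Matrix

/-- The standard positive definite quadratic form `Q(x) = x₁² + ⋯ + xₙ²` on `ℝⁿ`. -/
def Qstd (n : ℕ) : QuadraticForm ℝ (Fin n → ℝ) :=
  QuadraticMap.weightedSumSquares ℝ (fun _ : Fin n => (1 : ℝ))

/-- The Clifford algebra `Cl_n` of `Q(x) = x₁² + ⋯ + xₙ²`. -/
abbrev Cl (n : ℕ) := CliffordAlgebra (Qstd n)

/-- For a finite set `S = {s₁ < s₂ < ⋯ < s_k} ⊆ {1, …, n}`, the product
`e_S = ι(e_{s₁}) ι(e_{s₂}) ⋯ ι(e_{s_k})` in `Cl_n` (with `e_∅ = 1`). -/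
def eProd {n : ℕ} (S : Finset (Fin n)) : Cl n :=
  ((S.sort (· ≤ ·)).map fun j => CliffordAlgebra.ι (Qstd n) (Pi.single j 1)).prod


section Aux
variable {n : ℕ}

def ιe (a : Fin n) : Cl n := CliffordAlgebra.ι (Qstd n) (Pi.single a 1)

lemma Qstd_single (a : Fin n) : Qstd n (Pi.single a 1) = 1 := by
  simp [Qstd, QuadraticMap.weightedSumSquares_apply, Pi.single_apply]

lemma ιe_sq (a : Fin n) : ιe a * ιe a = 1 := by
  rw [ιe, CliffordAlgebra.ι_sq_scalar, Qstd_single, _root_.map_one]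

lemma polar_single {a b : Fin n} (h : a ≠ b) :
    QuadraticMap.polar (Qstd n) (Pi.single a 1) (Pi.single b 1) = 0 := by
  simp only [QuadraticMap.polar, Qstd, QuadraticMap.weightedSumSquares_apply,
    Pi.add_apply, Pi.single_apply, smul_eq_mul, one_mul]
  rw [Finset.sum_congr rfl (g := fun i => (if i = a then (1:ℝ) else 0) + (if i = b then 1 else 0))]
  · simp [Finset.sum_add_distrib, h]
  · intro i _
    by_cases hia : i = a <;> by_cases hib : i = b <;> simp_all

lemma ιe_anticomm {a b : Fin n} (h : a ≠ b) : ιe a * ιe b = -(ιe b * ιe a) := by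
  have := CliffordAlgebra.ι_mul_ι_add_swap (Q := Qstd n) (Pi.single a 1) (Pi.single b 1)
  rw [polar_single h, map_zero] at this
  exact eq_neg_of_add_eq_zero_left this

lemma neg_one_pow_central (k : ℕ) (x : Cl n) : (-1:Cl n)^k * x = x * (-1:Cl n)^k := by
  rcases Nat.even_or_odd k with h | h
  · rw [h.neg_one_pow]; simp
  · rw [h.neg_one_pow]; simp

def Pr (L : List (Fin n)) : Cl n := (L.map ιe).prod

lemma move (b : Fin n) (L : List (Fin n)) :
    ιe b * Pr L = (-1:Cl n)^(L.length + L.count b) * (Pr L * ιe b) := by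
  induction L with
  | nil => simp [Pr]
  | cons a L ih =>
    have hPr : Pr (a :: L) = ιe a * Pr L := by simp [Pr]
    by_cases hab : a = b
    · subst hab
      rw [hPr, List.length_cons, List.count_cons_self,
        show L.length + 1 + (L.count a + 1) = (L.length + L.count a) + 2 by ring,
        pow_add]
      calc ιe a * (ιe a * Pr L) = ιe a * ((-1)^(L.length + L.count a) * (Pr L * ιe a)) := by rw [ih]
        _ = (-1)^(L.length + L.count a) * (ιe a * (Pr L * ιe a)) := by
            rw [← mul_assoc, ← neg_one_pow_central, mul_assoc]
        _ = _ := by simp [mul_assoc]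
    · rw [hPr, List.length_cons, List.count_cons_of_ne hab,
        show L.length + 1 + L.count b = (L.length + L.count b) + 1 by ring, pow_succ]
      calc ιe b * (ιe a * Pr L) = (ιe b * ιe a) * Pr L := by rw [mul_assoc]
        _ = -((ιe a * ιe b) * Pr L) := by rw [ιe_anticomm (fun h => hab h.symm)]; simp
        _ = -(ιe a * ((-1)^(L.length + L.count b) * (Pr L * ιe b))) := by rw [mul_assoc, ih]
        _ = _ := by
            rw [← mul_assoc (ιe a), ← neg_one_pow_central, mul_assoc]
            simp [mul_assoc, mul_neg_one, neg_mul]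

lemma move' (b : Fin n) (L : List (Fin n)) :
    Pr L * ιe b = (-1:Cl n)^(L.length + L.count b) * (ιe b * Pr L) := by
  have h := move b L
  have hs : ((-1:Cl n)^(L.length + L.count b)) * ((-1:Cl n)^(L.length + L.count b)) = 1 := by
    rw [← pow_add, ← two_mul, pow_mul]; simp
  conv_rhs => rw [h]
  rw [← mul_assoc, hs, one_mul]

lemma swap (L M : List (Fin n)) :
    Pr L * Pr M = (-1:Cl n)^((M.map fun b => L.length + L.count b).sum) * (Pr M * Pr L) := by
  induction M with
  | nil => simp [Pr]
  | cons b M ih =>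
    have hPr : Pr (b :: M) = ιe b * Pr M := by simp [Pr]
    rw [hPr, List.map_cons, List.sum_cons, pow_add]
    calc Pr L * (ιe b * Pr M) = (Pr L * ιe b) * Pr M := by rw [mul_assoc]
      _ = (-1:Cl n)^(L.length + L.count b) * (ιe b * Pr L) * Pr M := by rw [move']
      _ = (-1:Cl n)^(L.length + L.count b) * (ιe b * (Pr L * Pr M)) := by
          rw [mul_assoc, mul_assoc]
      _ = (-1:Cl n)^(L.length + L.count b) * (ιe b *
            ((-1:Cl n)^((M.map fun b => L.length + L.count b).sum) * (Pr M * Pr L))) := by rw [ih]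
      _ = _ := by
          rw [← mul_assoc (ιe b), ← neg_one_pow_central]
          simp only [mul_assoc]

end Aux
lemma parity {n : ℕ} (S T : Finset (Fin n)) (hS : Even S.card) (hT : Even T.card)
    (hST : Odd (S ∩ T).card) :
    Odd (((T.sort (· ≤ ·)).map fun b =>
      (S.sort (· ≤ ·)).length + (S.sort (· ≤ ·)).count b).sum) := by
  have hperm := (Finset.sort_perm_toList (s := T) (r := (· ≤ ·))).map
    (fun b => (S.sort (· ≤ ·)).length + (S.sort (· ≤ ·)).count b)
  rw [hperm.sum_eq, Finset.sum_map_toList]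
  have hcount : ∀ b : Fin n, (S.sort (· ≤ ·)).count b = if b ∈ S then 1 else 0 := by
    intro b; by_cases hb : b ∈ S
    · rw [if_pos hb]
      exact List.count_eq_one_of_mem (Finset.sort_nodup _ _) ((Finset.mem_sort _).mpr hb)
    · rw [if_neg hb, List.count_eq_zero]
      simpa [Finset.mem_sort] using hb
  rw [Finset.sum_congr rfl fun b _ => by rw [hcount, Finset.length_sort]]
  rw [Finset.sum_add_distrib, Finset.sum_const]
  have h2 : (∑ b ∈ T, if b ∈ S then 1 else 0) = (S ∩ T).card := by
    rw [Finset.sum_ite_mem]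
    simp [Finset.inter_comm]
  rw [h2]
  exact (hT.mul_right _).add_odd hST

lemma sgen_comm {n : ℕ} (A : Matrix (Fin n) (Fin n) ℕ) (hA : IsBottMatrix A)
    (i j : Fin n) (hij : i < j) (hj : (j : ℕ) + 1 < n) (hij0 : A i j = 0) :
    sgen A i * sgen A j = sgen A j * sgen A i := by
  have hji0 : A j i = 0 := hA.2 j i (le_of_lt hij)
  have hi' : (i : ℕ) + 1 ≠ n := by omega
  have hj' : (j : ℕ) + 1 ≠ n := by omega
  rw [sgen, sgen, if_neg hi', if_neg hj']
  refine EuclideanGroup.ext ?_ ?_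
  · show Dorth A i * Dorth A j = Dorth A j * Dorth A i
    apply Subtype.ext
    show Dmat A i * Dmat A j = Dmat A j * Dmat A i
    rw [Dmat, Dmat, Matrix.diagonal_mul_diagonal, Matrix.diagonal_mul_diagonal]
    exact congrArg _ (funext fun k => mul_comm _ _)
  · show (Dmat A i) *ᵥ Pi.single j (1/2 : ℝ) + Pi.single i (1/2 : ℝ)
        = (Dmat A j) *ᵥ Pi.single i (1/2 : ℝ) + Pi.single j (1/2 : ℝ)
    rw [Dmat, Dmat, Matrix.diagonal_mulVec_single, Matrix.diagonal_mulVec_single,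
      hij0, hji0]
    simp [add_comm]

/-- Main Theorem, part I, Spin case.  Suppose every row of the Bott
matrix `A` has an even number of nonzero entries, and there are `1 ≤ i < j ≤ n - 1` with
`a_{i,j} = 0` such that `l = #{m : a_{i,m} = a_{j,m} = 1}` is odd.  Then no group
homomorphism `ε : Γ(A) → Cl_nˣ` satisfies `ε(s_i) = ± e_{S_i}` and `ε(s_j) = ± e_{S_j}`,
where `S_i`, `S_j` are the supports of rows `i`, `j`.  (Hence `M(A)` has no Spin
structure.) -/
theorem no_spin_part_I (n : ℕ) (hn : 2 ≤ n)
    (A : Matrix (Fin n) (Fin n) ℕ) (hA : IsBottMatrix A)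
    (horient : ∀ i : Fin n, Even (Finset.univ.filter fun k => A i k ≠ 0).card)
    (i j : Fin n) (hij : i < j) (hj : (j : ℕ) + 1 < n)
    (hij0 : A i j = 0)
    (hodd : Odd (Finset.univ.filter fun m => A i m = 1 ∧ A j m = 1).card) :
    ¬∃ ε : BottGroup A →* (Cl n)ˣ,
      (((ε ⟨sgen A i, sgen_mem A i⟩ : (Cl n)ˣ) : Cl n) =
          eProd (Finset.univ.filter fun m => A i m = 1) ∨
        ((ε ⟨sgen A i, sgen_mem A i⟩ : (Cl n)ˣ) : Cl n) =
          -eProd (Finset.univ.filter fun m => A i m = 1)) ∧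
      (((ε ⟨sgen A j, sgen_mem A j⟩ : (Cl n)ˣ) : Cl n) =
          eProd (Finset.univ.filter fun m => A j m = 1) ∨
        ((ε ⟨sgen A j, sgen_mem A j⟩ : (Cl n)ˣ) : Cl n) =
          -eProd (Finset.univ.filter fun m => A j m = 1)) := by
  rintro ⟨ε, hεi, hεj⟩
  classical
  set Si := Finset.univ.filter fun m => A i m = 1 with hSi
  set Sj := Finset.univ.filter fun m => A j m = 1 with hSj
  have hfe : ∀ r : Fin n,
      (Finset.univ.filter fun k => A r k = 1) = (Finset.univ.filter fun k => A r k ≠ 0) := by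
    intro r
    apply Finset.filter_congr
    intro k _
    rcases hA.1 r k with h | h <;> simp [h]
  have hEvi : Even Si.card := by rw [hSi, hfe i]; exact horient i
  have hEvj : Even Sj.card := by rw [hSj, hfe j]; exact horient j
  have hOddInter : Odd (Si ∩ Sj).card := by
    rw [← Finset.filter_and]
    exact hodd
  have hodd' := parity Si Sj hEvi hEvj hOddInter
  have hanti : eProd Si * eProd Sj = -(eProd Sj * eProd Si) := by
    rw [show eProd Si = Pr (Si.sort (· ≤ ·)) from rfl,
      show eProd Sj = Pr (Sj.sort (· ≤ ·)) from rfl,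
      swap (Si.sort (· ≤ ·)) (Sj.sort (· ≤ ·)), hodd'.neg_one_pow, neg_one_mul]
  set si : BottGroup A := ⟨sgen A i, sgen_mem A i⟩ with hsi
  set sj : BottGroup A := ⟨sgen A j, sgen_mem A j⟩ with hsj
  have hu : ε si * ε sj = ε sj * ε si := by
    rw [← _root_.map_mul, ← _root_.map_mul]
    congr 1
    exact Subtype.ext (sgen_comm A hA i j hij hj hij0)
  have hC : ((ε si : (Cl n)ˣ) : Cl n) * ((ε sj : (Cl n)ˣ) : Cl n)
      = ((ε sj : (Cl n)ˣ) : Cl n) * ((ε si : (Cl n)ˣ) : Cl n) := by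
    have := congrArg (Units.val) hu
    simpa using this
  have hcomm : eProd Si * eProd Sj = eProd Sj * eProd Si := by
    rcases hεi with h1 | h1 <;> rcases hεj with h2 | h2 <;> rw [h1, h2] at hC <;>
      simpa only [mul_neg, neg_mul, neg_neg, neg_inj] using hC
  have hzero : eProd Sj * eProd Si = 0 := by
    have h : eProd Sj * eProd Si = -(eProd Sj * eProd Si) := hcomm.symm.trans hanti
    have h2 : (2 : ℝ) • (eProd Sj * eProd Si) = 0 := by
      rw [two_smul]
      exact add_eq_zero_iff_eq_neg.mpr h
    exact (smul_eq_zero.mp h2).resolve_left (by norm_num)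
  have hne := Units.ne_zero (ε sj * ε si)
  apply hne
  rw [Units.val_mul]
  rcases hεj with h2 | h2 <;> rcases hεi with h1 | h1 <;> rw [h1, h2] <;>
    simp [hzero, mul_neg, neg_mul]
end
end

section
/- (Main Theorem, part I, Spin^ℂ case, group-theoretic form.) Let A be a Bott matrix such that every row of A has an even number of nonzero entries. Suppose there exist 1 ≤ i < j ≤ n−1 with a_{i,j} = 0 and such that l := #{m : a_{i,m} = a_{j,m} = 1} is odd. Put S_i = {m : a_{i,m} = 1} and S_j = {m : a_{j,m} = 1}. Then there exists no group homomorphism ε from Γ(A) to the group of units of the complex Clifford algebra Cl_nᶜ for which there are nonzero complex scalars z, w with ε(s_i) = z·e_{S_i} and ε(s_j) = w·e_{S_j}. (Such a homomorphism would be induced by a Spin^ℂ structure on M(A); hence M(A) admits no Spin^ℂ structure.) -/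
noncomputable section

open Matrix

/-- The standard quadratic form `Q(z) = z₁² + ⋯ + zₙ²` on `ℂⁿ`. -/
def QstdC (n : ℕ) : QuadraticForm ℂ (Fin n → ℂ) :=
  QuadraticMap.weightedSumSquares ℂ (fun _ : Fin n => (1 : ℂ))

/-- The complex Clifford algebra `Cl_nᶜ`. -/
abbrev ClC (n : ℕ) := CliffordAlgebra (QstdC n)

/-- For `S ⊆ {1, …, n}`, the product `e_S = ι(e_{s₁}) ⋯ ι(e_{s_k})` in `Cl_nᶜ`, over the
elements of `S` in increasing order. -/
def eProdC {n : ℕ} (S : Finset (Fin n)) : ClC n :=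
  ((S.sort (· ≤ ·)).map fun j => CliffordAlgebra.ι (QstdC n) (Pi.single j 1)).prod


namespace SpinAuxC

variable {n : ℕ}

noncomputable def f (n : ℕ) (m : Fin n) : ClC n :=
  CliffordAlgebra.ι (QstdC n) (Pi.single m 1)

lemma QstdC_single (m : Fin n) (c : ℂ) : QstdC n (Pi.single m c) = c * c := by
  simp [QstdC, Pi.single_apply, ite_mul, mul_ite, Finset.sum_ite_eq']

lemma ortho {m k : Fin n} (h : m ≠ k) :
    (QstdC n).IsOrtho (Pi.single m 1) (Pi.single k 1) := by
  unfold QuadraticMap.IsOrtho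
  simp [QstdC, Pi.single_apply, Pi.add_apply, ite_mul, mul_ite, add_mul, mul_add,
    Finset.sum_add_distrib, Finset.sum_ite_eq', h, h.symm]

lemma f_sq (m : Fin n) : f n m * f n m = 1 := by
  rw [f, CliffordAlgebra.ι_sq_scalar, QstdC_single]; simp

lemma f_anticomm {m k : Fin n} (h : m ≠ k) : f n m * f n k = -(f n k * f n m) :=
  CliffordAlgebra.ι_mul_ι_comm_of_isOrtho (ortho h)

lemma central_pow (k : ℕ) (x : ClC n) : x * (-1 : ClC n) ^ k = (-1 : ClC n) ^ k * x :=
  (((Commute.neg_one_left x).pow_left k).symm).eq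

/-- move one generator past a list -/
lemma f_mul_prod (m : Fin n) : ∀ L : List (Fin n),
    f n m * (L.map (f n)).prod =
      (-1 : ClC n) ^ (L.filter (fun b => b ≠ m)).length * ((L.map (f n)).prod * f n m)
  | [] => by simp
  | a :: t => by
    have IH := f_mul_prod m t
    simp only [List.map_cons, List.prod_cons, List.filter_cons]
    set P := (t.map (f n)).prod with hP
    set k := (t.filter (fun b => b ≠ m)).length with hk
    by_cases h : a = m
    · subst h
      have hd : (decide ¬(a = a)) = false := by simp
      rw [hd]
      calc f n a * (f n a * P) = (f n a * f n a) * P := by rw [mul_assoc]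
        _ = P := by rw [f_sq, one_mul]
        _ = (-1 : ClC n) ^ (k + k) * P := by
            rw [Even.neg_one_pow ⟨k, rfl⟩, one_mul]
        _ = (-1 : ClC n) ^ k * ((-1 : ClC n) ^ k * P) := by rw [pow_add, mul_assoc]
        _ = (-1 : ClC n) ^ k * ((-1 : ClC n) ^ k * (P * (f n a * f n a))) := by
            rw [f_sq, mul_one]
        _ = (-1 : ClC n) ^ k * (((-1 : ClC n) ^ k * (P * f n a)) * f n a) := by
            rw [mul_assoc, mul_assoc]
        _ = (-1 : ClC n) ^ k * ((f n a * P) * f n a) := by rw [← IH]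
    · have h' : m ≠ a := fun e => h e.symm
      have hd : (decide ¬(a = m)) = true := by simp [h]
      rw [hd]
      calc f n m * (f n a * P) = (f n m * f n a) * P := by rw [mul_assoc]
        _ = (-(f n a * f n m)) * P := by rw [f_anticomm h']
        _ = -(f n a * (f n m * P)) := by rw [neg_mul, mul_assoc]
        _ = -(f n a * ((-1 : ClC n) ^ k * (P * f n m))) := by rw [IH]
        _ = -((f n a * (-1 : ClC n) ^ k) * (P * f n m)) := by rw [mul_assoc]
        _ = -((-1 : ClC n) ^ k * (f n a * (P * f n m))) := by rw [central_pow, mul_assoc]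
        _ = ((-1 : ClC n) * (-1 : ClC n) ^ k) * (f n a * (P * f n m)) := by
            rw [neg_one_mul, neg_mul]
        _ = (-1 : ClC n) ^ (k + 1) * ((f n a * P) * f n m) := by
            rw [pow_succ, ← central_pow k (-1 : ClC n), mul_assoc (f n a)]

/-- move a list past a list -/
lemma prod_mul_prod (L2 : List (Fin n)) : ∀ L1 : List (Fin n),
    (L1.map (f n)).prod * (L2.map (f n)).prod =
      (-1 : ClC n) ^ (L1.map fun a => (L2.filter (fun b => b ≠ a)).length).sum *
        ((L2.map (f n)).prod * (L1.map (f n)).prod)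
  | [] => by simp
  | a :: t => by
    have IH := prod_mul_prod L2 t
    simp only [List.map_cons, List.prod_cons, List.sum_cons]
    set P := (t.map (f n)).prod
    set Q := (L2.map (f n)).prod
    set St := (t.map fun a => (L2.filter (fun b => b ≠ a)).length).sum with hSt
    set ka := (L2.filter (fun b => b ≠ a)).length with hka
    calc (f n a * P) * Q = f n a * (P * Q) := by rw [mul_assoc]
      _ = f n a * ((-1 : ClC n) ^ St * (Q * P)) := by rw [IH]
      _ = (f n a * (-1 : ClC n) ^ St) * (Q * P) := by rw [mul_assoc]
      _ = (-1 : ClC n) ^ St * ((f n a * Q) * P) := by rw [central_pow, mul_assoc, mul_assoc]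
      _ = (-1 : ClC n) ^ St * (((-1 : ClC n) ^ ka * (Q * f n a)) * P) := by
          rw [f_mul_prod a L2]
      _ = (-1 : ClC n) ^ St * ((-1 : ClC n) ^ ka * (Q * (f n a * P))) := by
          rw [mul_assoc, mul_assoc]
      _ = (-1 : ClC n) ^ (ka + St) * (Q * (f n a * P)) := by
          rw [pow_add, ← mul_assoc, ← central_pow St ((-1 : ClC n) ^ ka), mul_assoc]

lemma sum_map_add' {α} (g₁ g₂ : α → ℕ) : ∀ L : List α,
    (L.map fun a => g₁ a + g₂ a).sum = (L.map g₁).sum + (L.map g₂).sum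
  | [] => by simp
  | a :: t => by simp [sum_map_add' g₁ g₂ t]; omega

lemma len_filter_ne {α} [DecidableEq α] (a : α) : ∀ L : List α, L.Nodup →
    (L.filter (fun b => b ≠ a)).length + (if a ∈ L then 1 else 0) = L.length
  | [], _ => by simp
  | b :: t, h => by
    have hbt := (List.nodup_cons.mp h).1
    have IH := len_filter_ne a t (List.nodup_cons.mp h).2
    by_cases hba : b = a
    · subst hba
      have h1 : List.filter (fun x => decide (x ≠ b)) t = t :=
        List.filter_eq_self.mpr (fun x hx => by
          simp only [decide_eq_true_eq]; rintro rfl; exact hbt hx)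
      simp [List.filter_cons, h1]
      exact fun x hx hxb => hbt (hxb ▸ hx)
    · simp only [List.filter_cons, List.mem_cons]
      have hiff : (a = b ∨ a ∈ t) ↔ a ∈ t := by
        constructor
        · rintro (rfl | h)
          · exact absurd rfl hba
          · exact h
        · exact Or.inr
      have hd : (decide ¬(b = a)) = true := by simp [hba]
      simp only [hd, if_true, hiff, List.length_cons]
      omega

lemma sort_map_sum {s : Finset (Fin n)} (g : Fin n → ℕ) :
    ((s.sort (· ≤ ·)).map g).sum = ∑ a ∈ s, g a := by
  rw [Finset.sum, ← Finset.sort_eq (s := s) (r := (· ≤ ·)), Multiset.map_coe, Multiset.sum_coe]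

lemma eProdC_anticomm {S T : Finset (Fin n)} (hS : Even S.card) (hT : Even T.card)
    (hl : Odd (S ∩ T).card) : eProdC S * eProdC T = -(eProdC T * eProdC S) := by
  set L1 := S.sort (· ≤ ·) with hL1
  set L2 := T.sort (· ≤ ·) with hL2
  have hP : eProdC S = (L1.map (f n)).prod := rfl
  have hQ : eProdC T = (L2.map (f n)).prod := rfl
  set E := (L1.map fun a => (L2.filter (fun b => b ≠ a)).length).sum with hE
  have h1 : ∀ a : Fin n,
      (L2.filter (fun b => b ≠ a)).length + (if a ∈ L2 then 1 else 0) = L2.length :=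
    fun a => len_filter_ne a L2 (Finset.sort_nodup _ _)
  have h2 : E + (L1.map fun a => if a ∈ L2 then 1 else 0).sum = L1.length * L2.length := by
    rw [hE, ← sum_map_add']
    simp only [h1]
    simp [List.map_const', List.sum_replicate, smul_eq_mul]
  have h3 : (L1.map fun a => if a ∈ L2 then 1 else 0).sum = (S ∩ T).card := by
    have hm : ∀ a : Fin n, (if a ∈ L2 then (1 : ℕ) else 0) = (if a ∈ T then 1 else 0) :=
      fun a => by simp [hL2, Finset.mem_sort]
    simp only [hm, hL1]
    rw [sort_map_sum]
    rw [Finset.sum_ite_mem]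
    simp
  have h4 : Even (L1.length * L2.length) := by
    rw [hL1, hL2, Finset.length_sort, Finset.length_sort]
    exact hS.mul_right _
  have h5 : Even (E + (S ∩ T).card) := by rw [← h3, h2]; exact h4
  have hEodd : Odd E := by
    rcases Nat.even_or_odd E with he | ho
    · exfalso
      have := (Nat.even_add.mp h5).mp he
      exact (Nat.not_even_iff_odd.symm.mp hl) this
    · exact ho
  rw [hP, hQ, prod_mul_prod, ← hE, Odd.neg_one_pow hEodd, neg_one_mul]

lemma sgen_comm {A : Matrix (Fin n) (Fin n) ℕ} (hA : IsBottMatrix A) {i j : Fin n}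
    (hij : i < j) (hi : (i : ℕ) + 1 ≠ n) (hj : (j : ℕ) + 1 ≠ n) (hij0 : A i j = 0) :
    sgen A i * sgen A j = sgen A j * sgen A i := by
  have hji0 : A j i = 0 := hA.2 j i (le_of_lt hij)
  unfold sgen
  rw [if_neg hi, if_neg hj]
  refine EuclideanGroup.ext ?_ ?_
  · refine Subtype.ext ?_
    show Dmat A i * Dmat A j = Dmat A j * Dmat A i
    rw [Dmat, Dmat, Matrix.diagonal_mul_diagonal, Matrix.diagonal_mul_diagonal]
    have hc : (fun k => (-1 : ℝ) ^ A i k * (-1 : ℝ) ^ A j k)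
        = fun k => (-1 : ℝ) ^ A j k * (-1 : ℝ) ^ A i k := funext fun k => mul_comm _ _
    rw [hc]
  · show Dmat A i *ᵥ Pi.single j (1 / 2 : ℝ) + Pi.single i (1 / 2 : ℝ) =
      Dmat A j *ᵥ Pi.single i (1 / 2 : ℝ) + Pi.single j (1 / 2 : ℝ)
    simp only [Dmat, Matrix.diagonal_mulVec_single, hij0, hji0, pow_zero, one_mul]
    exact add_comm _ _

end SpinAuxC

/-- Main Theorem, part I, Spin^ℂ case.  Suppose every row of the Bott
matrix `A` has an even number of nonzero entries, and there are `1 ≤ i < j ≤ n - 1` with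
`a_{i,j} = 0` such that `l = #{m : a_{i,m} = a_{j,m} = 1}` is odd.  Then no group
homomorphism `ε : Γ(A) → (Cl_nᶜ)ˣ` satisfies `ε(s_i) = z e_{S_i}` and `ε(s_j) = w e_{S_j}`
for nonzero complex scalars `z, w`.  (Hence `M(A)` has no Spin^ℂ structure.) -/
theorem no_spinc_part_I (n : ℕ) (hn : 2 ≤ n)
    (A : Matrix (Fin n) (Fin n) ℕ) (hA : IsBottMatrix A)
    (horient : ∀ i : Fin n, Even (Finset.univ.filter fun k => A i k ≠ 0).card)
    (i j : Fin n) (hij : i < j) (hj : (j : ℕ) + 1 < n)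
    (hij0 : A i j = 0)
    (hodd : Odd (Finset.univ.filter fun m => A i m = 1 ∧ A j m = 1).card) :
    ¬∃ ε : BottGroup A →* (ClC n)ˣ, ∃ z w : ℂ, z ≠ 0 ∧ w ≠ 0 ∧
      ((ε ⟨sgen A i, sgen_mem A i⟩ : (ClC n)ˣ) : ClC n) =
        z • eProdC (Finset.univ.filter fun m => A i m = 1) ∧
      ((ε ⟨sgen A j, sgen_mem A j⟩ : (ClC n)ˣ) : ClC n) =
        w • eProdC (Finset.univ.filter fun m => A j m = 1) := by
  letI : Invertible (2 : ℂ) := invertibleOfNonzero two_ne_zero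
  rintro ⟨ε, z, w, hz, hw, hzi, hzj⟩
  set S : Finset (Fin n) := Finset.univ.filter fun m => A i m = 1 with hSdef
  set T : Finset (Fin n) := Finset.univ.filter fun m => A j m = 1 with hTdef
  have hilt : (i : ℕ) < (j : ℕ) := hij
  have hi1 : (i : ℕ) + 1 ≠ n := by omega
  have hj1 : (j : ℕ) + 1 ≠ n := by omega
  -- parity facts
  have hSfilter : ∀ k : Fin n, (Finset.univ.filter fun m => A k m ≠ 0)
      = Finset.univ.filter fun m => A k m = 1 := by
    intro k
    apply Finset.filter_congr
    intro m _
    rcases hA.1 k m with h | h <;> simp [h]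
  have hS : Even S.card := by rw [hSdef, ← hSfilter i]; exact horient i
  have hT : Even T.card := by rw [hTdef, ← hSfilter j]; exact horient j
  have hST : S ∩ T = Finset.univ.filter fun m => A i m = 1 ∧ A j m = 1 := by
    ext m
    simp [hSdef, hTdef, Finset.mem_inter, Finset.mem_filter]
  have hl : Odd (S ∩ T).card := by rw [hST]; exact hodd
  have hac := SpinAuxC.eProdC_anticomm hS hT hl
  -- group commutation
  have hgc : sgen A i * sgen A j = sgen A j * sgen A i :=
    SpinAuxC.sgen_comm hA hij hi1 hj1 hij0
  set si : BottGroup A := ⟨sgen A i, sgen_mem A i⟩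
  set sj : BottGroup A := ⟨sgen A j, sgen_mem A j⟩
  have hcc : si * sj = sj * si := Subtype.ext hgc
  have h5 : ((ε si : (ClC n)ˣ) : ClC n) * ((ε sj : (ClC n)ˣ) : ClC n)
      = ((ε sj : (ClC n)ˣ) : ClC n) * ((ε si : (ClC n)ˣ) : ClC n) := by
    have h := congrArg (fun u : (ClC n)ˣ => (u : ClC n)) (congrArg ε hcc)
    simpa [_root_.map_mul, Units.val_mul] using h
  rw [hzi, hzj] at h5
  have h6 : (z * w) • (eProdC S * eProdC T) = (w * z) • (eProdC T * eProdC S) := by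
    rw [← smul_mul_smul_comm, ← smul_mul_smul_comm]; exact h5
  rw [hac, mul_comm w z, smul_neg] at h6
  -- h6 : -( (z*w) • (eProdC T * eProdC S) ) = (z*w) • (eProdC T * eProdC S)
  have h7 : eProdC T * eProdC S = 0 := by
    have h8 : (z * w) • (eProdC T * eProdC S) + (z * w) • (eProdC T * eProdC S) = 0 := by
      nth_rewrite 1 [← h6]
      exact neg_add_cancel _
    rw [← two_smul ℂ, smul_smul] at h8
    have h9 := (smul_eq_zero.mp h8).resolve_left (by
      exact mul_ne_zero two_ne_zero (mul_ne_zero hz hw))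
    exact h9
  have h10 : ((ε (si * sj) : (ClC n)ˣ) : ClC n) = 0 := by
    rw [_root_.map_mul, Units.val_mul, hzi, hzj, smul_mul_smul_comm, hac, h7]
    simp
  exact Units.ne_zero _ h10
end
end

section
/- (Main Theorem, part II, group-theoretic form.) Let A be a Bott matrix such that every row of A has an even number of nonzero entries. Suppose there exist 1 ≤ i < j ≤ n−1 such that, writing S_i = {m : a_{i,m} = 1} and S_j = {m : a_{j,m} = 1}, the sets S_i and S_j are disjoint, |S_i| = 2k and |S_j| = 2l with k and l odd, and a_{i,j} = 1 (i.e. j ∈ S_i, which is implicit in the paper's hypotheses and guarantees the group relation (s_i s_j)² = s_i²). Then there exists no group homomorphism ε from Γ(A) to the group of units of Cl_n satisfying ε(s_i) ∈ {e_{S_i}, −e_{S_i}} and ε(s_j) ∈ {e_{S_j}, −e_{S_j}}. (Hence M(A) admits no Spin structure.) -/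
noncomputable section

open Matrix

namespace SpinAux

/-- shorthand for the Clifford generators -/
def ee {n : ℕ} (a : Fin n) : Cl n := CliffordAlgebra.ι (Qstd n) (Pi.single a 1)

lemma Qstd_single {n : ℕ} (a : Fin n) : Qstd n (Pi.single a 1) = 1 := by
  simp [Qstd, Pi.single_apply]

lemma Qstd_ortho {n : ℕ} {a b : Fin n} (h : a ≠ b) :
    (Qstd n).IsOrtho (Pi.single a 1) (Pi.single b 1) := by
  rw [QuadraticMap.isOrtho_def, Qstd_single, Qstd_single]
  simp [Qstd, Pi.single_apply, add_mul, mul_add, Finset.sum_add_distrib, h, h.symm]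

lemma ee_sq {n : ℕ} (a : Fin n) : ee a * ee a = 1 := by
  rw [ee, CliffordAlgebra.ι_sq_scalar, Qstd_single, RingHom.map_one]

lemma ee_comm {n : ℕ} {a b : Fin n} (h : a ≠ b) : ee a * ee b = -(ee b * ee a) :=
  CliffordAlgebra.ι_mul_ι_comm_of_isOrtho (Qstd_ortho h)

lemma prod_mul_ee {n : ℕ} (L : List (Fin n)) (a : Fin n) (h : a ∉ L) :
    (L.map ee).prod * ee a = (-1:ℝ)^L.length • (ee a * (L.map ee).prod) := by
  induction L with
  | nil => simp
  | cons b L ih =>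
    have hab : a ≠ b := fun e => h (e ▸ (List.mem_cons_self : b ∈ b :: L))
    have ha : a ∉ L := fun e => h (List.mem_cons_of_mem _ e)
    simp only [List.map_cons, List.prod_cons, List.length_cons]
    rw [mul_assoc, ih ha, mul_smul_comm, ← mul_assoc, ee_comm hab.symm,
      neg_mul, smul_neg, pow_succ, mul_assoc]
    rw [mul_smul, neg_one_smul, smul_neg]

lemma prod_sq {n : ℕ} (L : List (Fin n)) (h : L.Nodup) :
    (L.map ee).prod * (L.map ee).prod = (-1:ℝ)^(L.length.choose 2) • 1 := by
  induction L with
  | nil => simp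
  | cons a L ih =>
    have ha : a ∉ L := (List.nodup_cons.mp h).1
    have hL : L.Nodup := (List.nodup_cons.mp h).2
    simp only [List.map_cons, List.prod_cons, List.length_cons]
    rw [mul_assoc, ← mul_assoc (L.map ee).prod, prod_mul_ee L a ha,
      smul_mul_assoc, mul_smul_comm, mul_assoc, ← mul_assoc (ee a), ee_sq, one_mul,
      ih hL, smul_smul, ← pow_add]
    congr 1
    rw [Nat.choose_succ_succ, Nat.choose_one_right, add_comm]

lemma ee_mul_prod {n : ℕ} (L : List (Fin n)) (a : Fin n) (h : a ∉ L) :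
    ee a * (L.map ee).prod = (-1:ℝ)^L.length • ((L.map ee).prod * ee a) := by
  rw [prod_mul_ee L a h, smul_smul, ← pow_add]
  have : Even (L.length + L.length) := ⟨L.length, rfl⟩
  rw [this.neg_one_pow, one_smul]

lemma prods_comm {n : ℕ} (L1 L2 : List (Fin n)) (h : ∀ a ∈ L1, a ∉ L2) :
    (L1.map ee).prod * (L2.map ee).prod =
      (-1:ℝ)^(L1.length * L2.length) • ((L2.map ee).prod * (L1.map ee).prod) := by
  induction L1 with
  | nil => simp
  | cons a L1 ih =>
    have ha : a ∉ L2 := h a (List.mem_cons_self : a ∈ a :: L1)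
    have h' : ∀ b ∈ L1, b ∉ L2 := fun b hb => h b (List.mem_cons_of_mem _ hb)
    simp only [List.map_cons, List.prod_cons, List.length_cons]
    rw [mul_assoc, ih h', mul_smul_comm, ← mul_assoc, ee_mul_prod L2 a ha,
      smul_mul_assoc, smul_smul, mul_assoc, ← pow_add]
    congr 2
    ring

set_option synthInstance.maxHeartbeats 1000000 in
lemma one_ne_neg_one_Cl {n : ℕ} : (1 : Cl n) ≠ -1 := by
  intro h
  have h2 := congrArg (CliffordAlgebra.equivExterior (Qstd n)) h
  rw [map_neg] at h2
  have h1 : CliffordAlgebra.equivExterior (Qstd n) 1 =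
      algebraMap ℝ (ExteriorAlgebra ℝ (Fin n → ℝ)) 1 := by
    simpa using CliffordAlgebra.changeForm_algebraMap
      (CliffordAlgebra.changeForm.associated_neg_proof (Q := Qstd n)) (1 : ℝ)
  rw [h1] at h2
  have : (1:ℝ) = -1 := by
    apply (ExteriorAlgebra.algebraMap_leftInverse (Fin n → ℝ)).injective
    rw [RingHom.map_neg]
    simpa using h2
  norm_num at this

lemma eProd_eq {n : ℕ} (S : Finset (Fin n)) :
    eProd S = ((S.sort (· ≤ ·)).map ee).prod := rfl

lemma eProd_sq {n : ℕ} (S : Finset (Fin n)) :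
    eProd S * eProd S = (-1:ℝ)^(S.card.choose 2) • 1 := by
  rw [eProd_eq, prod_sq _ (S.sort_nodup _), Finset.length_sort]

lemma eProd_comm {n : ℕ} (S T : Finset (Fin n)) (h : Disjoint S T) :
    eProd S * eProd T = (-1:ℝ)^(S.card * T.card) • (eProd T * eProd S) := by
  rw [eProd_eq, eProd_eq, prods_comm, Finset.length_sort, Finset.length_sort]
  intro a haS haT
  rw [Finset.mem_sort] at haS haT
  exact (Finset.disjoint_left.mp h) haS haT

lemma sgen_rel {n : ℕ} (A : Matrix (Fin n) (Fin n) ℕ) (i j : Fin n)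
    (hij : i ≠ j) (hi : (i:ℕ)+1 ≠ n) (hjn : (j:ℕ)+1 ≠ n)
    (hAii : A i i = 0) (hAji : A j i = 0) (hAjj : A j j = 0) (hAij : A i j = 1) :
    (sgen A i * sgen A j) * (sgen A i * sgen A j) = sgen A i * sgen A i := by
  have hsi : sgen A i = ⟨Dorth A i, Pi.single i (1/2:ℝ)⟩ := if_neg hi
  have hsj : sgen A j = ⟨Dorth A j, Pi.single j (1/2:ℝ)⟩ := if_neg hjn
  rw [hsi, hsj]
  have hsq : ∀ x y : ℕ, ((-1:ℝ)^x * (-1:ℝ)^y) * ((-1:ℝ)^x * (-1:ℝ)^y) = 1 := by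
    intro x y
    rw [← pow_add, ← pow_add]
    exact Even.neg_one_pow ⟨x + y, rfl⟩
  refine EuclideanGroup.ext ?_ ?_
  · apply Subtype.ext
    push_cast [EuclideanGroup.mul_M]
    show (Dmat A i * Dmat A j) * (Dmat A i * Dmat A j) = Dmat A i * Dmat A i
    rw [Dmat, Dmat, Matrix.diagonal_mul_diagonal, Matrix.diagonal_mul_diagonal,
      Matrix.diagonal_mul_diagonal]
    have hfun : (fun m => ((-1:ℝ)^A i m * (-1:ℝ)^A j m) * ((-1:ℝ)^A i m * (-1:ℝ)^A j m)) =
        fun m => (-1:ℝ)^A i m * (-1:ℝ)^A i m := by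
      funext m
      rw [hsq]
      simpa using (hsq (A i m) 0).symm
    rw [hfun]
  · simp only [EuclideanGroup.mul_b, EuclideanGroup.mul_M, Submonoid.coe_mul]
    funext k
    have hDi : ((Dorth A i : Matrix (Fin n) (Fin n) ℝ)) = Dmat A i := rfl
    have hDj : ((Dorth A j : Matrix (Fin n) (Fin n) ℝ)) = Dmat A j := rfl
    rw [hDi, hDj, Dmat, Dmat, Matrix.diagonal_mul_diagonal]
    by_cases hki : k = i
    · subst hki
      simp [Matrix.mulVec_diagonal, Pi.single_apply, hAii, hAji, hij, Ne.symm hij]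
    · by_cases hkj : k = j
      · subst hkj
        simp [Matrix.mulVec_diagonal, Pi.single_apply, hAij, hAjj, hki, Ne.symm hki]
      · simp [Matrix.mulVec_diagonal, Pi.single_apply, hki, hkj, Ne.symm hki, Ne.symm hkj]

end SpinAux

open SpinAux

/-- Main Theorem, part II.  Suppose every row of the Bott matrix `A`
has an even number of nonzero entries, and there are `1 ≤ i < j ≤ n - 1` such that the
supports `S_i`, `S_j` of rows `i`, `j` are disjoint, `|S_i| = 2k`, `|S_j| = 2l` with `k`
and `l` odd, and `a_{i,j} = 1`.  Then no group homomorphism `ε : Γ(A) → Cl_nˣ` satisfies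
`ε(s_i) = ± e_{S_i}` and `ε(s_j) = ± e_{S_j}`.  (Hence `M(A)` has no Spin structure.) -/
theorem no_spin_part_II (n : ℕ) (hn : 2 ≤ n)
    (A : Matrix (Fin n) (Fin n) ℕ) (hA : IsBottMatrix A)
    (horient : ∀ i : Fin n, Even (Finset.univ.filter fun k => A i k ≠ 0).card)
    (i j : Fin n) (hij : i < j) (hj : (j : ℕ) + 1 < n)
    (k l : ℕ) (hk : Odd k) (hl : Odd l)
    (hSi : (Finset.univ.filter fun m => A i m = 1).card = 2 * k)
    (hSj : (Finset.univ.filter fun m => A j m = 1).card = 2 * l)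
    (hdisj : Disjoint (Finset.univ.filter fun m => A i m = 1)
      (Finset.univ.filter fun m => A j m = 1))
    (hij1 : A i j = 1) :
    ¬∃ ε : BottGroup A →* (Cl n)ˣ,
      (((ε ⟨sgen A i, sgen_mem A i⟩ : (Cl n)ˣ) : Cl n) =
          eProd (Finset.univ.filter fun m => A i m = 1) ∨
        ((ε ⟨sgen A i, sgen_mem A i⟩ : (Cl n)ˣ) : Cl n) =
          -eProd (Finset.univ.filter fun m => A i m = 1)) ∧
      (((ε ⟨sgen A j, sgen_mem A j⟩ : (Cl n)ˣ) : Cl n) =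
          eProd (Finset.univ.filter fun m => A j m = 1) ∨
        ((ε ⟨sgen A j, sgen_mem A j⟩ : (Cl n)ˣ) : Cl n) =
          -eProd (Finset.univ.filter fun m => A j m = 1)) := by
  rintro ⟨ε, hεi, hεj⟩
  set Si : Finset (Fin n) := Finset.univ.filter fun m => A i m = 1 with hSidef
  set Sj : Finset (Fin n) := Finset.univ.filter fun m => A j m = 1 with hSjdef
  set X : Cl n := eProd Si with hX
  set Y : Cl n := eProd Sj with hY
  have hijne : i ≠ j := ne_of_lt hij
  have hvij : (i:ℕ) < (j:ℕ) := hij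
  have hin : (i:ℕ) + 1 ≠ n := by omega
  have hjn : (j:ℕ) + 1 ≠ n := by omega
  have hgrel : ((⟨sgen A i, sgen_mem A i⟩ : BottGroup A) * ⟨sgen A j, sgen_mem A j⟩) *
      ((⟨sgen A i, sgen_mem A i⟩ : BottGroup A) * ⟨sgen A j, sgen_mem A j⟩) =
      (⟨sgen A i, sgen_mem A i⟩ : BottGroup A) * ⟨sgen A i, sgen_mem A i⟩ :=
    Subtype.ext (sgen_rel A i j hijne hin hjn (hA.2 i i le_rfl)
      (hA.2 j i (le_of_lt hvij)) (hA.2 j j le_rfl) hij1)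
  have hU := congrArg (fun g => ((ε g : (Cl n)ˣ) : Cl n)) hgrel
  simp only [_root_.map_mul, Units.val_mul] at hU
  have hXX : X * X = -1 := by
    rw [hX, eProd_sq, hSi]
    have hodd : Odd ((2*k).choose 2) := by
      have h2 : 2*k*(2*k-1) = 2*(k*(2*k-1)) := by ring
      rw [Nat.choose_two_right, h2, Nat.mul_div_cancel_left _ (by norm_num)]
      refine hk.mul ?_
      obtain ⟨m, rfl⟩ := hk
      exact ⟨2*m, by omega⟩
    rw [hodd.neg_one_pow, neg_smul, one_smul]
  have hYY : Y * Y = -1 := by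
    rw [hY, eProd_sq, hSj]
    have hodd : Odd ((2*l).choose 2) := by
      have h2 : 2*l*(2*l-1) = 2*(l*(2*l-1)) := by ring
      rw [Nat.choose_two_right, h2, Nat.mul_div_cancel_left _ (by norm_num)]
      refine hl.mul ?_
      obtain ⟨m, rfl⟩ := hl
      exact ⟨2*m, by omega⟩
    rw [hodd.neg_one_pow, neg_smul, one_smul]
  have hcomm : X * Y = Y * X := by
    rw [hX, hY, eProd_comm _ _ hdisj, hSi, hSj]
    have heven : Even (2*k*(2*l)) := ⟨k*(2*l), by ring⟩
    rw [heven.neg_one_pow, one_smul]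
  have hfinal : (X*Y)*(X*Y) = 1 := by
    rw [mul_assoc, ← mul_assoc Y X Y, ← hcomm, mul_assoc X Y Y, ← mul_assoc, hXX, hYY]
    simp
  have contra : ¬ ((X*Y)*(X*Y) = X*X) := by
    rw [hfinal, hXX]
    exact one_ne_neg_one_Cl
  rcases hεi with h1 | h1 <;> rcases hεj with h2 | h2 <;>
    rw [h1, h2] at hU <;>
    (try simp only [neg_mul, mul_neg, neg_neg] at hU) <;> exact contra hU
end
end

section
/- (Example: the manifold M(A_23) has no Spin structure, via part II of the main theorem.) Let A_23 be the 5×5 Bott matrix whose rows are (0,1,1,0,0), (0,0,0,0,0), (0,0,0,1,1), (0,0,0,0,0), (0,0,0,0,0). Then there exists no group homomorphism ε from Γ(A_23) to the group of units of Cl_5 satisfying ε(s_1) ∈ {ι(e_2)ι(e_3), −ι(e_2)ι(e_3)} and ε(s_3) ∈ {ι(e_4)ι(e_5), −ι(e_4)ι(e_5)}. -/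
noncomputable section

open Matrix

/-- The Bott matrix `A₂₃` from Nazra's list of `5`-dimensional oriented real Bott
manifolds. -/
def A23 : Matrix (Fin 5) (Fin 5) ℕ :=
  !![0,1,1,0,0; 0,0,0,0,0; 0,0,0,1,1; 0,0,0,0,0; 0,0,0,0,0]

theorem hrel : sgen A23 0 * sgen A23 2 = (sgen A23 2)⁻¹ * sgen A23 0 := by
  have hs0 : sgen A23 0 = ⟨Dorth A23 0, Pi.single 0 (1/2 : ℝ)⟩ := rfl
  have hs2 : sgen A23 2 = ⟨Dorth A23 2, Pi.single 2 (1/2 : ℝ)⟩ := rfl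
  refine EuclideanGroup.ext ?_ ?_
  · simp only [EuclideanGroup.mul_M, EuclideanGroup.inv_M, hs0, hs2]
    refine Subtype.ext ?_
    show (Dmat A23 0) * (Dmat A23 2) = star (Dmat A23 2) * (Dmat A23 0)
    simp only [Dmat, Matrix.star_eq_conjTranspose, Matrix.diagonal_conjTranspose,
      Matrix.diagonal_mul_diagonal]
    funext k
    simp [mul_comm]
  · simp only [EuclideanGroup.mul_b, EuclideanGroup.mul_M, EuclideanGroup.inv_M,
      EuclideanGroup.inv_b, hs0, hs2]
    show (Dmat A23 0) *ᵥ _ + _ = star (Dmat A23 2) *ᵥ _ + -(star (Dmat A23 2) *ᵥ _)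
    funext k
    fin_cases k <;>
      norm_num [Dmat, A23, Matrix.mulVec, dotProduct, Fin.sum_univ_five,
        Matrix.diagonal, Pi.single_apply, Matrix.star_eq_conjTranspose,
        Matrix.diagonal_conjTranspose, Fin.ext_iff] <;> rfl
namespace SpinAux
open CliffordAlgebra

noncomputable def f (i : Fin 5) : Cl 5 := ι (Qstd 5) (Pi.single i 1)

theorem hQ (i : Fin 5) : Qstd 5 (Pi.single i 1) = 1 := by
  simp [Qstd, QuadraticMap.weightedSumSquares_apply, Pi.single_apply, Finset.sum_ite_eq',
    mul_ite, ite_mul]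

theorem hsq (i : Fin 5) : f i * f i = 1 := by
  rw [f, ι_sq_scalar, hQ, _root_.map_one]

theorem hanti {i j : Fin 5} (h : i ≠ j) : f i * f j = -(f j * f i) := by
  have hp : QuadraticMap.polar (Qstd 5) (Pi.single i (1:ℝ)) (Pi.single j (1:ℝ)) = 0 := by
    have h0 : ∀ k : Fin 5, (Pi.single i (1:ℝ) : Fin 5 → ℝ) k * (Pi.single j (1:ℝ) : Fin 5 → ℝ) k = 0 := by
      intro k
      rcases eq_or_ne k i with rfl | hk
      · simp [Pi.single_eq_of_ne h]
      · simp [Pi.single_eq_of_ne hk]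
    simp only [QuadraticMap.polar, Qstd, QuadraticMap.weightedSumSquares_apply,
      smul_eq_mul, one_mul, Pi.add_apply]
    rw [← Finset.sum_sub_distrib, ← Finset.sum_sub_distrib]
    refine Finset.sum_eq_zero fun k _ => ?_
    have := h0 k
    ring_nf
    nlinarith [h0 k]
  have := CliffordAlgebra.ι_mul_ι_add_swap (Q := Qstd 5) (Pi.single i 1) (Pi.single j 1)
  rw [hp, map_zero] at this
  have : f i * f j + f j * f i = 0 := this
  linear_combination (norm := noncomm_ring) this

theorem nontriv : (1 : Cl 5) ≠ 0 := one_ne_zero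

end SpinAux
namespace SpinAux

theorem hmove {a b c : Fin 5} (hab : a ≠ b) (hac : a ≠ c) :
    f a * (f b * f c) = (f b * f c) * f a := by
  calc f a * (f b * f c) = (f a * f b) * f c := (mul_assoc _ _ _).symm
    _ = -(f b * f a) * f c := by rw [hanti hab]
    _ = -(f b * (f a * f c)) := by rw [neg_mul, mul_assoc]
    _ = -(f b * -(f c * f a)) := by rw [hanti hac]
    _ = (f b * f c) * f a := by rw [mul_neg, neg_neg, ← mul_assoc]

theorem hcomm : (f 1 * f 2) * (f 3 * f 4) = (f 3 * f 4) * (f 1 * f 2) := by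
  calc (f 1 * f 2) * (f 3 * f 4) = f 1 * (f 2 * (f 3 * f 4)) := mul_assoc _ _ _
    _ = f 1 * ((f 3 * f 4) * f 2) := by rw [hmove (by decide) (by decide)]
    _ = (f 1 * (f 3 * f 4)) * f 2 := (mul_assoc _ _ _).symm
    _ = ((f 3 * f 4) * f 1) * f 2 := by rw [hmove (by decide) (by decide)]
    _ = (f 3 * f 4) * (f 1 * f 2) := mul_assoc _ _ _

theorem ysq : (f 3 * f 4) * (f 3 * f 4) = -1 := by
  calc (f 3 * f 4) * (f 3 * f 4) = f 3 * (f 4 * f 3) * f 4 := by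
        simp only [mul_assoc]
    _ = f 3 * -(f 3 * f 4) * f 4 := by rw [hanti (show (4:Fin 5) ≠ 3 by decide)]
    _ = -((f 3 * f 3) * (f 4 * f 4)) := by
        simp only [mul_neg, neg_mul, mul_assoc]
    _ = -1 := by rw [hsq, hsq, one_mul]

end SpinAux

/-- The real Bott manifold `M(A₂₃)` has no Spin structure (via part II
of the main theorem): no group homomorphism `ε : Γ(A₂₃) → Cl₅ˣ` satisfies
`ε(s₁) = ± ι(e₂) ι(e₃)` and `ε(s₃) = ± ι(e₄) ι(e₅)` (indices `0`-based below). -/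
theorem A23_no_spin :
    ¬∃ ε : BottGroup A23 →* (Cl 5)ˣ,
      (((ε ⟨sgen A23 0, sgen_mem A23 0⟩ : (Cl 5)ˣ) : Cl 5) =
          CliffordAlgebra.ι (Qstd 5) (Pi.single 1 1) *
            CliffordAlgebra.ι (Qstd 5) (Pi.single 2 1) ∨
        ((ε ⟨sgen A23 0, sgen_mem A23 0⟩ : (Cl 5)ˣ) : Cl 5) =
          -(CliffordAlgebra.ι (Qstd 5) (Pi.single 1 1) *
            CliffordAlgebra.ι (Qstd 5) (Pi.single 2 1))) ∧
      (((ε ⟨sgen A23 2, sgen_mem A23 2⟩ : (Cl 5)ˣ) : Cl 5) =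
          CliffordAlgebra.ι (Qstd 5) (Pi.single 3 1) *
            CliffordAlgebra.ι (Qstd 5) (Pi.single 4 1) ∨
        ((ε ⟨sgen A23 2, sgen_mem A23 2⟩ : (Cl 5)ˣ) : Cl 5) =
          -(CliffordAlgebra.ι (Qstd 5) (Pi.single 3 1) *
            CliffordAlgebra.ι (Qstd 5) (Pi.single 4 1))) := by
  rintro ⟨ε, h1, h2⟩
  set s0 : BottGroup A23 := ⟨sgen A23 0, sgen_mem A23 0⟩ with hs0def
  set s2 : BottGroup A23 := ⟨sgen A23 2, sgen_mem A23 2⟩ with hs2def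
  set x : Cl 5 := ((ε s0 : (Cl 5)ˣ) : Cl 5) with hx
  set y : Cl 5 := ((ε s2 : (Cl 5)ˣ) : Cl 5) with hy
  -- restate hypotheses in terms of f
  have h1' : x = SpinAux.f 1 * SpinAux.f 2 ∨ x = -(SpinAux.f 1 * SpinAux.f 2) := h1
  have h2' : y = SpinAux.f 3 * SpinAux.f 4 ∨ y = -(SpinAux.f 3 * SpinAux.f 4) := h2
  -- group relation
  have hsub : s0 * s2 = s2⁻¹ * s0 := Subtype.ext hrel
  have hmap := congrArg ε hsub
  rw [_root_.map_mul, _root_.map_mul, map_inv] at hmap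
  have hcl : x * y = ((ε s2)⁻¹ : (Cl 5)ˣ) * x := congrArg Units.val hmap
  -- y² = -1
  have hy2 : y * y = -1 := by
    rcases h2' with h | h <;> rw [h]
    · exact SpinAux.ysq
    · rw [neg_mul_neg]; exact SpinAux.ysq
  -- inverse of ε s2
  have hyinv : (((ε s2)⁻¹ : (Cl 5)ˣ) : Cl 5) = -y := by
    have hone : y * (-y) = 1 := by rw [mul_neg, hy2, neg_neg]
    calc (((ε s2)⁻¹ : (Cl 5)ˣ) : Cl 5)
        = (((ε s2)⁻¹ : (Cl 5)ˣ) : Cl 5) * (y * (-y)) := by rw [hone, mul_one]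
      _ = ((((ε s2)⁻¹ : (Cl 5)ˣ) : Cl 5) * y) * (-y) := (mul_assoc _ _ _).symm
      _ = -y := by rw [hy, Units.inv_mul, one_mul]
  -- x and y commute
  have hco : x * y = y * x := by
    rcases h1' with ha | ha <;> rcases h2' with hb | hb <;> rw [ha, hb] <;>
      simp only [neg_mul, mul_neg, neg_neg, neg_inj, SpinAux.hcomm]
  -- combine: x * y = -(x * y)
  have hkey : x * y = -(x * y) := by
    conv_lhs => rw [hcl, hyinv]
    rw [neg_mul, hco]
  -- hence x * y = 0
  have hz : x * y = 0 := by
    have h2s : (2 : ℝ) • (x * y) = 0 := by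
      rw [two_smul]; nth_rewrite 2 [hkey]; exact add_neg_cancel _
    rcases smul_eq_zero.mp h2s with h | h
    · norm_num at h
    · exact h
  have : ((ε s0 * ε s2 : (Cl 5)ˣ) : Cl 5) = 0 := by rw [Units.val_mul, ← hx, ← hy, hz]
  exact Units.ne_zero _ this
end
end
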